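/- arXiv:1201.0461 — 8 statements merged into one kernel-verified Lean document; each statement's English description precedes it below -/
import Mathlib

section
/- Let N be a finite set of n players, x : N → EuclideanSpace ℝ (Fin 2), f : ℝ → ℝ, w(i,j) = f(dist(x i, x j)), and ν(S) = (1/2) Σ_{i∈S} Σ_{j∈S, j≠i} w(i,j). Then for every player i ∈ N, the Shapley value Σ_{S⊆N, i∈S} ((|S|−1)!·(n−|S|)!/n!) · (ν(S) − ν(S∖{i})) equals (1/2) Σ_{S⊆N, i∈S, |S|=2} ν(S), i.e., half the sum of the values of all two-element coalitions containing i. -/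
open Finset

lemma numer_aux (m : ℕ) :
    ∑ k ∈ Finset.range (m+1), (k + 1 : ℝ) = (m+1)*(m+2)/2 := by
  induction m with
  | zero => norm_num
  | succ n ih => rw [Finset.sum_range_succ, ih]; push_cast; ring

lemma numer (m : ℕ) :
    ∑ k ∈ Finset.range (m+1), (m.choose k : ℝ) *
      ((Nat.factorial (k+1) * Nat.factorial (m - k) : ℝ) / (Nat.factorial (m+2) : ℝ)) = 1/2 := by
  have h : ∀ k ∈ Finset.range (m+1), (m.choose k : ℝ) *
      ((Nat.factorial (k+1) * Nat.factorial (m - k) : ℝ) / (Nat.factorial (m+2) : ℝ))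
      = (k+1 : ℝ) * ((Nat.factorial m : ℝ) / (Nat.factorial (m+2) : ℝ)) := by
    intro k hk
    rw [Finset.mem_range, Nat.lt_succ_iff] at hk
    have hc : (m.choose k) * (Nat.factorial k * Nat.factorial (m - k)) = Nat.factorial m := by
      rw [← Nat.choose_mul_factorial_mul_factorial hk]; ring
    have hc' : (m.choose k : ℝ) * (Nat.factorial k * Nat.factorial (m - k)) = Nat.factorial m := by
      exact_mod_cast congrArg (Nat.cast : ℕ → ℝ) hc
    rw [Nat.factorial_succ]
    push_cast
    field_simp
    nlinarith [hc']
  rw [Finset.sum_congr rfl h, ← Finset.sum_mul, numer_aux]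
  have h2 : (Nat.factorial (m+2) : ℝ) = (m+2)*(m+1)*(Nat.factorial m) := by
    rw [Nat.factorial_succ, Nat.factorial_succ]; push_cast; ring
  rw [h2]
  have h3 : (Nat.factorial m : ℝ) ≠ 0 := by positivity
  field_simp

lemma marg {N : Type*} [DecidableEq N] (w : N → N → ℝ)
    (hsymm : ∀ a b, w a b = w b a)
    (ν : Finset N → ℝ)
    (hν : ∀ S : Finset N, ν S = (1/2) * ∑ a ∈ S, ∑ b ∈ S.filter (· ≠ a), w a b)
    (i : N) (S : Finset N) (hi : i ∈ S) :
    ν S - ν (S.erase i) = ∑ j ∈ S.erase i, w i j := by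
  set T := S.erase i with hT
  have hiT : i ∉ T := Finset.notMem_erase i S
  have hS : S = insert i T := (Finset.insert_erase hi).symm
  have hTne : ∀ b ∈ T, b ≠ i := fun b hb => Finset.ne_of_mem_erase hb
  rw [hν S, hν T, hS]
  rw [Finset.sum_insert hiT]
  have h1 : (insert i T).filter (· ≠ i) = T := by
    rw [Finset.filter_insert]
    simp only [ne_eq, not_true_eq_false, if_false, if_neg]
    · exact Finset.filter_true_of_mem fun b hb => hTne b hb
  have h2 : ∀ a ∈ T, ∑ b ∈ (insert i T).filter (· ≠ a), w a b
      = w a i + ∑ b ∈ T.filter (· ≠ a), w a b := by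
    intro a ha
    have hia : (i : N) ≠ a := fun h => (hTne a ha) h.symm
    rw [Finset.filter_insert, if_pos hia, Finset.sum_insert]
    exact fun h => hiT (Finset.mem_of_mem_filter i h)
  rw [h1, Finset.sum_congr rfl h2, Finset.sum_add_distrib]
  have h3 : ∑ a ∈ T, w a i = ∑ a ∈ T, w i a := Finset.sum_congr rfl fun a _ => (hsymm a i)
  rw [h3]
  ring

lemma comb {N : Type*} [Fintype N] [DecidableEq N] (i j : N) (hij : j ≠ i) :
    ∑ S ∈ Finset.univ.powerset.filter (fun S : Finset N => i ∈ S ∧ j ∈ S),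
      ((Nat.factorial (S.card - 1) * Nat.factorial (Fintype.card N - S.card) : ℝ)
        / (Nat.factorial (Fintype.card N) : ℝ)) = 1/2 := by
  classical
  set n := Fintype.card N with hn
  set U : Finset N := (Finset.univ.erase i).erase j with hU
  have hiU : i ∉ U := fun h => (Finset.notMem_erase i Finset.univ) (Finset.mem_of_mem_erase h)
  have hjU : j ∉ U := Finset.notMem_erase j _
  have hUcard : U.card = n - 2 := by
    rw [hU, Finset.card_erase_of_mem, Finset.card_erase_of_mem (Finset.mem_univ i)]
    · rfl
    · exact Finset.mem_erase.mpr ⟨hij, Finset.mem_univ j⟩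
  have key : ∑ S ∈ Finset.univ.powerset.filter (fun S : Finset N => i ∈ S ∧ j ∈ S),
      ((Nat.factorial (S.card - 1) * Nat.factorial (n - S.card) : ℝ)
        / (Nat.factorial n : ℝ))
      = ∑ T ∈ U.powerset,
      ((Nat.factorial (T.card + 1) * Nat.factorial (n - (T.card + 2)) : ℝ)
        / (Nat.factorial n : ℝ)) := by
    refine Finset.sum_nbij' (fun S => (S.erase i).erase j) (fun T => insert i (insert j T))
      ?_ ?_ ?_ ?_ ?_
    · intro S hS
      rw [Finset.mem_filter] at hS
      rw [Finset.mem_powerset]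
      intro a ha
      rw [hU]
      exact Finset.mem_erase.mpr ⟨Finset.ne_of_mem_erase ha,
        Finset.mem_erase.mpr ⟨Finset.ne_of_mem_erase (Finset.mem_of_mem_erase ha), Finset.mem_univ a⟩⟩
    · intro T hT
      rw [Finset.mem_filter]
      refine ⟨Finset.mem_powerset.mpr (Finset.subset_univ _), Finset.mem_insert_self i _,
        Finset.mem_insert_of_mem (Finset.mem_insert_self j _)⟩
    · intro S hS
      rw [Finset.mem_filter] at hS
      show insert i (insert j ((S.erase i).erase j)) = S
      rw [Finset.insert_erase (Finset.mem_erase.mpr ⟨hij, hS.2.2⟩), Finset.insert_erase hS.2.1]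
    · intro T hT
      rw [Finset.mem_powerset] at hT
      have hjT : j ∉ T := fun h => hjU (hT h)
      have hiT : i ∉ insert j T := by
        rw [Finset.mem_insert]
        rintro (h | h)
        · exact hij h.symm
        · exact hiU (hT h)
      show ((insert i (insert j T)).erase i).erase j = T
      rw [Finset.erase_insert hiT, Finset.erase_insert hjT]
    · intro S hS
      rw [Finset.mem_filter] at hS
      have hc : ((S.erase i).erase j).card + 2 = S.card := by
        rw [Finset.card_erase_of_mem, Finset.card_erase_of_mem hS.2.1]
        · have h1 : 1 ≤ S.card := Finset.card_pos.mpr ⟨i, hS.2.1⟩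
          have h2 : 2 ≤ S.card := Finset.one_lt_card.mpr ⟨i, hS.2.1, j, hS.2.2, hij.symm⟩
          omega
        · exact Finset.mem_erase.mpr ⟨hij, hS.2.2⟩
      rw [← hc]
      norm_num
  rw [key]
  have h2n : 2 ≤ n := Finset.one_lt_card.mpr ⟨i, Finset.mem_univ i, j, Finset.mem_univ j, hij.symm⟩
  obtain ⟨m, hm⟩ : ∃ m, n = m + 2 := ⟨n - 2, by omega⟩
  have := Finset.sum_powerset_apply_card
    (fun c => ((Nat.factorial (c + 1) * Nat.factorial (n - (c + 2)) : ℝ)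
        / (Nat.factorial n : ℝ))) (x := U)
  rw [this, hUcard]
  have hU2 : n - 2 = m := by omega
  rw [hU2]
  have := numer m
  rw [← this]
  refine Finset.sum_congr rfl fun k hk => ?_
  rw [Finset.mem_range, Nat.lt_succ_iff] at hk
  rw [nsmul_eq_mul]
  have : n - (k + 2) = m - k := by omega
  rw [this, hm]

theorem clustering_game_shapley_value_pair_form
    {N : Type*} [Fintype N] [DecidableEq N]
    (x : N → EuclideanSpace ℝ (Fin 2)) (f : ℝ → ℝ)
    (w : N → N → ℝ) (hw : ∀ i j, w i j = f (dist (x i) (x j)))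
    (ν : Finset N → ℝ)
    (hν : ∀ S : Finset N,
      ν S = (1/2) * ∑ i ∈ S, ∑ j ∈ S.filter (· ≠ i), w i j) :
    ∀ i : N,
      ∑ S ∈ Finset.univ.powerset.filter (fun S : Finset N => i ∈ S),
        ((Nat.factorial (S.card - 1) * Nat.factorial (Fintype.card N - S.card) : ℝ)
          / (Nat.factorial (Fintype.card N) : ℝ)) * (ν S - ν (S.erase i))
      = (1/2) * ∑ S ∈ Finset.univ.powerset.filter
          (fun S : Finset N => i ∈ S ∧ S.card = 2), ν S := by
  intro i
  classical
  have hsymm : ∀ a b, w a b = w b a := by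
    intro a b; rw [hw, hw, dist_comm]
  set c : Finset N → ℝ := fun S =>
    ((Nat.factorial (S.card - 1) * Nat.factorial (Fintype.card N - S.card) : ℝ)
      / (Nat.factorial (Fintype.card N) : ℝ)) with hc
  -- Step 1: rewrite LHS using the marginal contribution formula
  have step1 : ∑ S ∈ Finset.univ.powerset.filter (fun S : Finset N => i ∈ S),
      c S * (ν S - ν (S.erase i))
      = ∑ j ∈ Finset.univ.erase i,
          (∑ S ∈ Finset.univ.powerset.filter (fun S : Finset N => i ∈ S ∧ j ∈ S), c S) * w i j := by
    have h1 : ∀ S ∈ Finset.univ.powerset.filter (fun S : Finset N => i ∈ S),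
        c S * (ν S - ν (S.erase i))
        = ∑ j ∈ Finset.univ.erase i, (if j ∈ S then c S * w i j else 0) := by
      intro S hS
      rw [Finset.mem_filter] at hS
      rw [marg w hsymm ν hν i S hS.2, Finset.mul_sum]
      rw [← Finset.sum_filter]
      congr 1
      ext a
      simp only [Finset.mem_filter, Finset.mem_erase, Finset.mem_univ, true_and]
      tauto
    rw [Finset.sum_congr rfl h1, Finset.sum_comm]
    refine Finset.sum_congr rfl fun j hj => ?_
    rw [Finset.sum_mul, ← Finset.sum_filter, Finset.filter_filter]
  rw [step1]
  -- Step 2: evaluate the inner coefficient sum using `comb`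
  have step2 : ∀ j ∈ Finset.univ.erase i,
      (∑ S ∈ Finset.univ.powerset.filter (fun S : Finset N => i ∈ S ∧ j ∈ S), c S) * w i j
      = (1/2) * w i j := by
    intro j hj
    rw [comb i j (Finset.ne_of_mem_erase hj)]
  rw [Finset.sum_congr rfl step2, ← Finset.mul_sum]
  -- Step 3: evaluate the RHS over two-element coalitions
  congr 1
  have hbij : ∑ j ∈ Finset.univ.erase i, w i j
      = ∑ S ∈ Finset.univ.powerset.filter (fun S : Finset N => i ∈ S ∧ S.card = 2), ν S := by
    refine Finset.sum_nbij (fun j => insert i {j}) ?_ ?_ ?_ ?_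
    · intro j hj
      rw [Finset.mem_filter]
      refine ⟨Finset.mem_powerset.mpr (Finset.subset_univ _), Finset.mem_insert_self i _, ?_⟩
      rw [Finset.card_insert_of_notMem, Finset.card_singleton]
      simp only [Finset.mem_singleton]
      exact fun h => Finset.ne_of_mem_erase hj h.symm
    · intro a ha b hb hab
      simp only at hab
      have : a ∈ insert i ({b} : Finset N) :=
        hab ▸ Finset.mem_insert_of_mem (Finset.mem_singleton_self a)
      rcases Finset.mem_insert.mp this with h | h
      · exact absurd h (Finset.ne_of_mem_erase (Finset.mem_coe.mp ha))
      · exact Finset.mem_singleton.mp h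
    · intro S hS
      rw [Finset.coe_filter] at hS
      obtain ⟨hSp, hiS, hS2⟩ := hS
      obtain ⟨a, b, hab, rfl⟩ := Finset.card_eq_two.mp hS2
      rcases Finset.mem_insert.mp hiS with h | h
      · subst h
        refine ⟨b, ?_, rfl⟩
        simp only [Finset.coe_erase, Set.mem_diff, Set.mem_singleton_iff]
        exact ⟨Finset.mem_coe.mpr (Finset.mem_univ b), fun hb => hab hb.symm⟩
      · rw [Finset.mem_singleton] at h
        subst h
        refine ⟨a, ?_, ?_⟩
        · simp only [Finset.coe_erase, Set.mem_diff, Set.mem_singleton_iff]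
          exact ⟨Finset.mem_coe.mpr (Finset.mem_univ a), fun ha => hab ha⟩
        · simp only
          rw [Finset.pair_comm]
    · intro j hj
      have hji : j ≠ i := Finset.ne_of_mem_erase hj
      have : ν (insert i {j}) = w i j := by
        rw [hν]
        have hij' : (i : N) ≠ j := fun h => hji h.symm
        have hij : i ∉ ({j} : Finset N) := Finset.notMem_singleton.mpr hij'
        rw [Finset.sum_insert hij, Finset.sum_singleton]
        have e1 : (insert i ({j} : Finset N)).filter (· ≠ i) = {j} := by
          rw [Finset.filter_insert, if_neg (by simp), Finset.filter_singleton, if_pos hji]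
        have e2 : (insert i ({j} : Finset N)).filter (· ≠ j) = {i} := by
          rw [Finset.filter_insert, if_pos hij', Finset.filter_singleton, if_neg (by simp)]
          rfl
        rw [e1, e2, Finset.sum_singleton, Finset.sum_singleton, hsymm j i]
        ring
      exact this.symm
  exact hbij
end

section
/- Let N be a finite set of players, x : N → EuclideanSpace ℝ (Fin 2), f : ℝ → ℝ, w(i,j) = f(dist(x i, x j)), ν(S) = (1/2) Σ_{i∈S} Σ_{j∈S, j≠i} w(i,j), and φ_i = (1/2) Σ_{j∈N, j≠i} w(i,j). Then for every coalition S ⊆ N, the excess of S at φ equals the excess of its complement at φ: ν(S) − Σ_{i∈S} φ_i = ν(N∖S) − Σ_{i∈N∖S} φ_i. -/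
theorem clustering_game_excess_complement
    {N : Type*} [Fintype N] [DecidableEq N]
    (x : N → EuclideanSpace ℝ (Fin 2)) (f : ℝ → ℝ)
    (w : N → N → ℝ) (hw : ∀ i j, w i j = f (dist (x i) (x j)))
    (ν : Finset N → ℝ)
    (hν : ∀ S : Finset N,
      ν S = (1/2) * ∑ i ∈ S, ∑ j ∈ S.filter (· ≠ i), w i j)
    (φ : N → ℝ)
    (hφ : ∀ i : N, φ i = (1/2) * ∑ j ∈ Finset.univ.filter (· ≠ i), w i j) :
    ∀ S : Finset N,
      ν S - ∑ i ∈ S, φ i = ν Sᶜ - ∑ i ∈ Sᶜ, φ i := by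
  have hsymm : ∀ i j, w i j = w j i := by
    intro i j; rw [hw, hw, dist_comm]
  have key : ∀ T : Finset N,
      ν T - ∑ i ∈ T, φ i = -(1/2) * ∑ i ∈ T, ∑ j ∈ Tᶜ, w i j := by
    intro T
    rw [hν]
    simp only [hφ]
    rw [← Finset.mul_sum, ← mul_sub, ← Finset.sum_sub_distrib]
    have h : ∀ i ∈ T, (∑ j ∈ T.filter (· ≠ i), w i j)
        - ∑ j ∈ Finset.univ.filter (· ≠ i), w i j = -∑ j ∈ Tᶜ, w i j := by
      intro i hi
      have hsplit : Finset.univ.filter (· ≠ i) = T.filter (· ≠ i) ∪ Tᶜ := by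
        ext j
        simp only [Finset.mem_filter, Finset.mem_union, Finset.mem_univ,
          Finset.mem_compl, true_and]
        constructor
        · intro hj
          by_cases hjT : j ∈ T
          · exact Or.inl ⟨hjT, hj⟩
          · exact Or.inr hjT
        · rintro (⟨_, hj⟩ | hj)
          · exact hj
          · intro h; exact hj (h ▸ hi)
      have hdisj : Disjoint (T.filter (· ≠ i)) Tᶜ := by
        apply Finset.disjoint_left.mpr
        intro j hj hj'
        exact (Finset.mem_compl.mp hj') (Finset.mem_filter.mp hj).1
      rw [hsplit, Finset.sum_union hdisj]
      ring
    rw [Finset.sum_congr rfl h]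
    rw [Finset.sum_neg_distrib]
    ring
  intro S
  rw [key S, key Sᶜ, compl_compl]
  rw [Finset.sum_comm]
  congr 1
  exact Finset.sum_congr rfl fun i _ => Finset.sum_congr rfl fun j _ => hsymm j i
end

section
/- Let N be a finite set of players, x : N → EuclideanSpace ℝ (Fin 2), f : ℝ → ℝ with 0 ≤ f(d) ≤ 1 for all d ≥ 0, w(i,j) = f(dist(x i, x j)), ν(S) = (1/2) Σ_{i∈S} Σ_{j∈S, j≠i} w(i,j), and φ_i = (1/2) Σ_{j∈N, j≠i} w(i,j). Then φ lies in the core of the game (N, ν): (1) φ_i ≥ ν({i}) for all i ∈ N; (2) Σ_{i∈N} φ_i = ν(N); (3) Σ_{i∈S} φ_i ≥ ν(S) for every coalition S ⊆ N. -/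
theorem clustering_game_shapley_in_core
    {N : Type*} [Fintype N] [DecidableEq N]
    (x : N → EuclideanSpace ℝ (Fin 2)) (f : ℝ → ℝ)
    (hf : ∀ d : ℝ, 0 ≤ d → 0 ≤ f d ∧ f d ≤ 1)
    (w : N → N → ℝ) (hw : ∀ i j, w i j = f (dist (x i) (x j)))
    (ν : Finset N → ℝ)
    (hν : ∀ S : Finset N,
      ν S = (1/2) * ∑ i ∈ S, ∑ j ∈ S.filter (· ≠ i), w i j)
    (φ : N → ℝ)
    (hφ : ∀ i : N, φ i = (1/2) * ∑ j ∈ Finset.univ.filter (· ≠ i), w i j) :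
    (∀ i : N, φ i ≥ ν {i}) ∧
    (∑ i : N, φ i = ν Finset.univ) ∧
    (∀ S : Finset N, ∑ i ∈ S, φ i ≥ ν S) := by
  have hw0 : ∀ i j, 0 ≤ w i j := fun i j => by
    rw [hw]; exact (hf _ dist_nonneg).1
  have key : ∀ S : Finset N, ∑ i ∈ S, φ i ≥ ν S := by
    intro S
    rw [hν]
    have h1 : ∑ i ∈ S, φ i
        = (1/2) * ∑ i ∈ S, ∑ j ∈ Finset.univ.filter (· ≠ i), w i j := by
      rw [Finset.mul_sum]; exact Finset.sum_congr rfl fun i _ => hφ i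
    rw [h1]
    apply mul_le_mul_of_nonneg_left _ (by norm_num : (0:ℝ) ≤ 1/2)
    apply Finset.sum_le_sum
    intro i _
    apply Finset.sum_le_sum_of_subset_of_nonneg
    · intro j hj
      simp only [Finset.mem_filter] at *
      exact ⟨Finset.mem_univ j, hj.2⟩
    · intro j _ _; exact hw0 i j
  refine ⟨fun i => by simpa using key {i}, ?_, key⟩
  have := key Finset.univ
  have h2 : ν Finset.univ = ∑ i : N, φ i := by
    rw [hν, Finset.mul_sum]
    exact Finset.sum_congr rfl fun i _ => (hφ i).symm
  linarith
end

section
/- Let N be a finite set of players, x : N → EuclideanSpace ℝ (Fin 2), f : ℝ → ℝ, w(i,j) = f(dist(x i, x j)), ν(S) = (1/2) Σ_{i∈S} Σ_{j∈S, j≠i} w(i,j), and φ_i = (1/2) Σ_{j∈N, j≠i} w(i,j). Then for every efficient allocation y : N → ℝ (i.e., Σ_{i∈N} y_i = ν(N)) and every coalition S ⊆ N, max(e_S(y), e_{N∖S}(y)) ≥ e_S(φ), where e_S(y) = ν(S) − Σ_{i∈S} y_i is the excess of S at y. -/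
theorem clustering_game_max_excess_lower_bound
    {N : Type*} [Fintype N] [DecidableEq N]
    (x : N → EuclideanSpace ℝ (Fin 2)) (f : ℝ → ℝ)
    (w : N → N → ℝ) (hw : ∀ i j, w i j = f (dist (x i) (x j)))
    (ν : Finset N → ℝ)
    (hν : ∀ S : Finset N,
      ν S = (1/2) * ∑ i ∈ S, ∑ j ∈ S.filter (· ≠ i), w i j)
    (φ : N → ℝ)
    (hφ : ∀ i : N, φ i = (1/2) * ∑ j ∈ Finset.univ.filter (· ≠ i), w i j) :
    ∀ y : N → ℝ, (∑ i : N, y i = ν Finset.univ) →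
      ∀ S : Finset N,
        max (ν S - ∑ i ∈ S, y i) (ν Sᶜ - ∑ i ∈ Sᶜ, y i)
          ≥ ν S - ∑ i ∈ S, φ i := by
  intro y hy S
  have hsym : ∀ i j, w i j = w j i := by
    intro i j; rw [hw, hw, dist_comm]
  have key : ∀ T : Finset N,
      (∑ i ∈ T, φ i) - ν T = (1/2) * ∑ i ∈ T, ∑ j ∈ Tᶜ, w i j := by
    intro T
    rw [hν]
    simp only [hφ]
    rw [← Finset.mul_sum, ← mul_sub, ← Finset.sum_sub_distrib]
    congr 1
    apply Finset.sum_congr rfl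
    intro i hi
    have hU : Finset.univ.filter (· ≠ i) = T.filter (· ≠ i) ∪ Tᶜ := by
      ext j
      simp only [Finset.mem_filter, Finset.mem_univ, true_and, Finset.mem_union,
        Finset.mem_compl]
      constructor
      · intro hj
        by_cases hjT : j ∈ T
        · exact Or.inl ⟨hjT, hj⟩
        · exact Or.inr hjT
      · rintro (⟨_, hj⟩ | hj)
        · exact hj
        · intro h; subst h; exact hj hi
    have hdisj : Disjoint (T.filter (· ≠ i)) Tᶜ := by
      apply Finset.disjoint_left.mpr
      intro j hj hj'
      exact (Finset.mem_compl.mp hj') (Finset.mem_filter.mp hj).1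
    rw [hU, Finset.sum_union hdisj]
    ring
  -- Σ φ over univ = ν univ
  have htot : (∑ i : N, φ i) = ν Finset.univ := by
    have := key Finset.univ
    simp only [Finset.compl_univ, Finset.sum_empty, mul_zero, Finset.sum_const_zero] at this
    linarith
  -- excess of S at φ equals excess of Sᶜ at φ
  have hcomm : (∑ i ∈ S, ∑ j ∈ Sᶜ, w i j) = ∑ i ∈ Sᶜ, ∑ j ∈ Sᶜᶜ, w i j := by
    rw [compl_compl, Finset.sum_comm]
    exact Finset.sum_congr rfl fun i _ => Finset.sum_congr rfl fun j _ => hsym j i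
  have hAB : ν S - ∑ i ∈ S, φ i = ν Sᶜ - ∑ i ∈ Sᶜ, φ i := by
    have h1 := key S
    have h2 := key Sᶜ
    rw [← hcomm] at h2
    linarith
  -- split sums over S and Sᶜ
  have hsplit : ∀ g : N → ℝ, (∑ i ∈ S, g i) + (∑ i ∈ Sᶜ, g i) = ∑ i : N, g i := by
    intro g
    rw [← Finset.sum_union (disjoint_compl_right), Finset.union_compl]
  have hy' := hsplit y
  have hφ' := hsplit φ
  have h1 := le_max_left (ν S - ∑ i ∈ S, y i) (ν Sᶜ - ∑ i ∈ Sᶜ, y i)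
  have h2 := le_max_right (ν S - ∑ i ∈ S, y i) (ν Sᶜ - ∑ i ∈ Sᶜ, y i)
  have : (ν S - ∑ i ∈ S, y i) + (ν Sᶜ - ∑ i ∈ Sᶜ, y i)
      = (ν S - ∑ i ∈ S, φ i) + (ν Sᶜ - ∑ i ∈ Sᶜ, φ i) := by
    rw [← htot] at hy
    linarith
  linarith
end

section
/- Let N be a finite set of at least two players, x : N → EuclideanSpace ℝ (Fin 2), f : ℝ → ℝ, w(i,j) = f(dist(x i, x j)), ν(S) = (1/2) Σ_{i∈S} Σ_{j∈S, j≠i} w(i,j), and φ_i = (1/2) Σ_{j∈N, j≠i} w(i,j). Then φ minimizes the maximal excess among efficient allocations: for every efficient allocation y : N → ℝ, the maximum over all nonempty proper coalitions S ⊊ N of e_S(y) is at least the maximum over all nonempty proper coalitions S ⊊ N of e_S(φ), where e_S(y) = ν(S) − Σ_{i∈S} y_i. -/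
theorem clustering_game_shapley_minimizes_max_excess
    {N : Type*} [Fintype N] [DecidableEq N] (hN : 2 ≤ Fintype.card N)
    (x : N → EuclideanSpace ℝ (Fin 2)) (f : ℝ → ℝ)
    (w : N → N → ℝ) (hw : ∀ i j, w i j = f (dist (x i) (x j)))
    (ν : Finset N → ℝ)
    (hν : ∀ S : Finset N,
      ν S = (1/2) * ∑ i ∈ S, ∑ j ∈ S.filter (· ≠ i), w i j)
    (φ : N → ℝ)
    (hφ : ∀ i : N, φ i = (1/2) * ∑ j ∈ Finset.univ.filter (· ≠ i), w i j) :
    ∀ y : N → ℝ, (∑ i : N, y i = ν Finset.univ) →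
      sSup {r : ℝ | ∃ S : Finset N, S.Nonempty ∧ S ≠ Finset.univ ∧
              r = ν S - ∑ i ∈ S, y i}
        ≥ sSup {r : ℝ | ∃ S : Finset N, S.Nonempty ∧ S ≠ Finset.univ ∧
              r = ν S - ∑ i ∈ S, φ i} := by
  intro y hy
  have hsym : ∀ i j : N, w i j = w j i := by
    intro i j; rw [hw, hw, dist_comm]
  -- excess of φ at a coalition S
  have hE : ∀ S : Finset N, ν S - ∑ i ∈ S, φ i
      = -(1/2) * ∑ i ∈ S, ∑ j ∈ Sᶜ, w i j := by
    intro S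
    have hsplit : ∀ i ∈ S, ∑ j ∈ Finset.univ.filter (· ≠ i), w i j
        = (∑ j ∈ S.filter (· ≠ i), w i j) + ∑ j ∈ Sᶜ, w i j := by
      intro i hi
      have h1 : (Finset.univ.filter (· ≠ i)).filter (· ∈ S) = S.filter (· ≠ i) := by
        ext j; simp [and_comm]
      have h2 : (Finset.univ.filter (· ≠ i)).filter (· ∉ S) = Sᶜ := by
        ext j
        simp only [Finset.mem_filter, Finset.mem_univ, true_and, Finset.mem_compl]
        constructor
        · exact fun h => h.2
        · intro h; exact ⟨fun he => h (he ▸ hi), h⟩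
      rw [← Finset.sum_filter_add_sum_filter_not (Finset.univ.filter (· ≠ i)) (· ∈ S),
        h1, h2]
    have key : ∑ i ∈ S, ∑ j ∈ Finset.univ.filter (· ≠ i), w i j
        = (∑ i ∈ S, ∑ j ∈ S.filter (· ≠ i), w i j) + ∑ i ∈ S, ∑ j ∈ Sᶜ, w i j := by
      rw [← Finset.sum_add_distrib]; exact Finset.sum_congr rfl hsplit
    rw [hν]
    simp only [hφ]
    rw [← Finset.mul_sum, key]; ring
  have hEsym : ∀ S : Finset N, ν S - ∑ i ∈ S, φ i = ν Sᶜ - ∑ i ∈ Sᶜ, φ i := by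
    intro S
    rw [hE, hE, compl_compl]
    congr 1
    rw [Finset.sum_comm]
    exact Finset.sum_congr rfl fun j _ => Finset.sum_congr rfl fun i _ => hsym _ _
  have hφeff : ∑ i : N, φ i = ν Finset.univ := by
    rw [hν]; simp only [hφ]; rw [Finset.mul_sum]
  set Ay := {r : ℝ | ∃ S : Finset N, S.Nonempty ∧ S ≠ Finset.univ ∧
      r = ν S - ∑ i ∈ S, y i} with hAy
  have hfin : Ay.Finite := by
    have hs : Ay ⊆ Set.range (fun S : Finset N => ν S - ∑ i ∈ S, y i) := by
      rintro r ⟨S, _, _, rfl⟩; exact ⟨S, rfl⟩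
    exact (Set.finite_range _).subset hs
  have hbdd : BddAbove Ay := hfin.bddAbove
  -- the φ-excess set is nonempty
  have hcard : (0 : ℕ) < Fintype.card N := by omega
  have : Nonempty N := Fintype.card_pos_iff.mp hcard
  obtain ⟨i0⟩ := this
  have hne : ({i0} : Finset N) ≠ Finset.univ := by
    intro h
    have : Fintype.card N = 1 := by
      rw [← Finset.card_univ, ← h, Finset.card_singleton]
    omega
  refine csSup_le ⟨ν {i0} - ∑ i ∈ ({i0} : Finset N), φ i,
    ⟨{i0}, Finset.singleton_nonempty i0, hne, rfl⟩⟩ ?_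
  rintro r ⟨S, hSne, hSuniv, rfl⟩
  -- the two y-excesses of S and Sᶜ sum to twice the φ-excess
  have hsumy : (ν S - ∑ i ∈ S, y i) + (ν Sᶜ - ∑ i ∈ Sᶜ, y i)
      = 2 * (ν S - ∑ i ∈ S, φ i) := by
    have h1 : (∑ i ∈ S, y i) + ∑ i ∈ Sᶜ, y i = ∑ i : N, y i :=
      Finset.sum_add_sum_compl S y
    have h2 : (∑ i ∈ S, φ i) + ∑ i ∈ Sᶜ, φ i = ∑ i : N, φ i :=
      Finset.sum_add_sum_compl S φ
    have h3 := hEsym S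
    rw [hy] at h1
    rw [hφeff] at h2
    linarith
  have hScne : (Sᶜ : Finset N).Nonempty := by
    rw [Finset.nonempty_iff_ne_empty]
    intro h
    exact hSuniv (by simpa [Finset.compl_eq_empty_iff] using h)
  have hScuniv : (Sᶜ : Finset N) ≠ Finset.univ :=
    (Finset.compl_ne_univ_iff_nonempty S).mpr hSne
  have hmem1 : (ν S - ∑ i ∈ S, y i) ∈ Ay := ⟨S, hSne, hSuniv, rfl⟩
  have hmem2 : (ν Sᶜ - ∑ i ∈ Sᶜ, y i) ∈ Ay := ⟨Sᶜ, hScne, hScuniv, rfl⟩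
  have le1 := le_csSup hbdd hmem1
  have le2 := le_csSup hbdd hmem2
  rcases le_total (ν S - ∑ i ∈ S, y i) (ν Sᶜ - ∑ i ∈ Sᶜ, y i) with h | h
  · linarith
  · linarith
end

section
/- Let N be a finite set of players, x : N → EuclideanSpace ℝ (Fin 2), f : ℝ → ℝ, w(i,j) = f(dist(x i, x j)), ν(S) = (1/2) Σ_{i∈S} Σ_{j∈S, j≠i} w(i,j), and φ_i = (1/2) Σ_{j∈N, j≠i} w(i,j). Then for every player i ∈ N, Σ_{j∈N, j≠i} φ_j − ν(N∖{i}) = φ_i − ν({i}); in particular, whenever φ_i > ν({i}), the propensity to disrupt of player i at φ, namely d_i(φ) = (Σ_{j≠i} φ_j − ν(N∖{i})) / (φ_i − ν({i})), equals 1. -/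
theorem clustering_game_propensity_to_disrupt
    {N : Type*} [Fintype N] [DecidableEq N]
    (x : N → EuclideanSpace ℝ (Fin 2)) (f : ℝ → ℝ)
    (w : N → N → ℝ) (hw : ∀ i j, w i j = f (dist (x i) (x j)))
    (ν : Finset N → ℝ)
    (hν : ∀ S : Finset N,
      ν S = (1/2) * ∑ i ∈ S, ∑ j ∈ S.filter (· ≠ i), w i j)
    (φ : N → ℝ)
    (hφ : ∀ i : N, φ i = (1/2) * ∑ j ∈ Finset.univ.filter (· ≠ i), w i j) :
    ∀ i : N,
      ((∑ j ∈ Finset.univ.filter (· ≠ i), φ j) - ν (Finset.univ.erase i)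
        = φ i - ν {i}) ∧
      (φ i > ν {i} →
        ((∑ j ∈ Finset.univ.filter (· ≠ i), φ j) - ν (Finset.univ.erase i))
          / (φ i - ν {i}) = 1) := by
  intro i
  have hsym : ∀ a b, w a b = w b a := fun a b => by rw [hw, hw, dist_comm]
  have hν1 : ν ({i} : Finset N) = 0 := by
    rw [hν]
    simp [Finset.filter_singleton]
  have key : (∑ j ∈ Finset.univ.filter (· ≠ i), φ j) - ν (Finset.univ.erase i)
      = φ i := by
    rw [hν, hφ]
    simp only [hφ, Finset.filter_ne']
    rw [← Finset.mul_sum, ← mul_sub, ← Finset.sum_sub_distrib]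
    congr 1
    apply Finset.sum_congr rfl
    intro j hj
    have hji : j ≠ i := Finset.ne_of_mem_erase hj
    have hi : i ∈ Finset.univ.erase j :=
      Finset.mem_erase.mpr ⟨hji.symm, Finset.mem_univ i⟩
    rw [Finset.erase_right_comm, ← Finset.sum_erase_add _ _ hi, hsym j i]
    ring
  constructor
  · rw [hν1, sub_zero]; exact key
  · intro h
    rw [hν1] at h ⊢
    rw [sub_zero, key]
    exact div_self (ne_of_gt h)
end

section
/- Let N be a finite set of players, x : N → EuclideanSpace ℝ (Fin 2), f : ℝ → ℝ, w(i,j) = f(dist(x i, x j)), ν(S) = (1/2) Σ_{i∈S} Σ_{j∈S, j≠i} w(i,j), and φ_i = (1/2) Σ_{j∈N, j≠i} w(i,j). If ν(N) ≠ 0, then the Shapley value coincides with the Gately point: for every i ∈ N, φ_i = ((ν(N) − ν(N∖{i})) / Σ_{j∈N} (ν(N) − ν(N∖{j}))) · ν(N). -/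
theorem clustering_game_shapley_eq_gately
    {N : Type*} [Fintype N] [DecidableEq N]
    (x : N → EuclideanSpace ℝ (Fin 2)) (f : ℝ → ℝ)
    (w : N → N → ℝ) (hw : ∀ i j, w i j = f (dist (x i) (x j)))
    (ν : Finset N → ℝ)
    (hν : ∀ S : Finset N,
      ν S = (1/2) * ∑ i ∈ S, ∑ j ∈ S.filter (· ≠ i), w i j)
    (φ : N → ℝ)
    (hφ : ∀ i : N, φ i = (1/2) * ∑ j ∈ Finset.univ.filter (· ≠ i), w i j)
    (hgrand : ν Finset.univ ≠ 0) :
    ∀ i : N,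
      φ i = ((ν Finset.univ - ν (Finset.univ.erase i))
        / ∑ j : N, (ν Finset.univ - ν (Finset.univ.erase j)))
          * ν Finset.univ := by
  have hsymm : ∀ a b, w a b = w b a := fun a b => by rw [hw, hw, dist_comm]
  have key : ∀ i : N, ν Finset.univ - ν (Finset.univ.erase i) = 2 * φ i := by
    intro i
    rw [hν, hν, hφ]
    have h1 : ∀ i' ∈ Finset.univ.erase i,
        ∑ j ∈ Finset.univ.filter (· ≠ i'), w i' j
          = w i' i + ∑ j ∈ (Finset.univ.erase i).filter (· ≠ i'), w i' j := by
      intro i' hi'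
      have hne : i' ≠ i := Finset.ne_of_mem_erase hi'
      rw [Finset.filter_ne', Finset.filter_ne', Finset.erase_right_comm,
        ← Finset.add_sum_erase _ _ (Finset.mem_erase.mpr ⟨(Ne.symm hne), Finset.mem_univ i⟩)]
    have h2 : (∑ i' ∈ Finset.univ, ∑ j ∈ Finset.univ.filter (· ≠ i'), w i' j)
        = (∑ j ∈ Finset.univ.filter (· ≠ i), w i j)
          + ∑ i' ∈ Finset.univ.erase i, ∑ j ∈ Finset.univ.filter (· ≠ i'), w i' j :=
      (Finset.add_sum_erase _ _ (Finset.mem_univ i)).symm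
    rw [h2, Finset.sum_congr rfl h1, Finset.sum_add_distrib]
    have h3 : (∑ i' ∈ Finset.univ.erase i, w i' i)
        = ∑ j ∈ Finset.univ.filter (· ≠ i), w i j := by
      rw [Finset.filter_ne']
      exact Finset.sum_congr rfl fun j _ => hsymm j i
    rw [h3]
    ring
  intro i
  have hsum : ∑ j : N, (ν Finset.univ - ν (Finset.univ.erase j)) = 2 * ν Finset.univ := by
    simp_rw [key]
    rw [← Finset.mul_sum]
    congr 1
    rw [hν]
    simp_rw [hφ]
    rw [← Finset.mul_sum]
  rw [key, hsum]
  field_simp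
end

section
/- Let N be a finite set of players, x : N → EuclideanSpace ℝ (Fin 2), f : ℝ → ℝ, w(i,j) = f(dist(x i, x j)), ν(S) = (1/2) Σ_{i∈S} Σ_{j∈S, j≠i} w(i,j), and φ_i = (1/2) Σ_{j∈N, j≠i} w(i,j). Suppose ν(N) ≠ 0 and λ ∈ ℝ satisfies the efficiency condition Σ_{i∈N} (λ·(ν(N) − ν(N∖{i})) + (1−λ)·ν({i})) = ν(N). Then λ = 1/2, and the τ-value coincides with the Shapley value: for every i ∈ N, λ·(ν(N) − ν(N∖{i})) + (1−λ)·ν({i}) = φ_i. -/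
theorem clustering_game_shapley_eq_tau
    {N : Type*} [Fintype N] [DecidableEq N]
    (x : N → EuclideanSpace ℝ (Fin 2)) (f : ℝ → ℝ)
    (w : N → N → ℝ) (hw : ∀ i j, w i j = f (dist (x i) (x j)))
    (ν : Finset N → ℝ)
    (hν : ∀ S : Finset N,
      ν S = (1/2) * ∑ i ∈ S, ∑ j ∈ S.filter (· ≠ i), w i j)
    (φ : N → ℝ)
    (hφ : ∀ i : N, φ i = (1/2) * ∑ j ∈ Finset.univ.filter (· ≠ i), w i j)
    (hgrand : ν Finset.univ ≠ 0)
    (lam : ℝ)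
    (hlam : ∑ i : N, (lam * (ν Finset.univ - ν (Finset.univ.erase i))
      + (1 - lam) * ν {i}) = ν Finset.univ) :
    lam = 1/2 ∧
    ∀ i : N,
      lam * (ν Finset.univ - ν (Finset.univ.erase i))
        + (1 - lam) * ν {i} = φ i := by
  classical
  have hsym : ∀ i j, w i j = w j i := by
    intro i j; rw [hw, hw, dist_comm]
  have hsingle : ∀ i : N, ν ({i} : Finset N) = 0 := by
    intro i
    rw [hν]
    simp [Finset.filter_singleton]
  -- key: marginal contribution
  have hM : ∀ i : N, ν Finset.univ - ν (Finset.univ.erase i)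
      = ∑ j ∈ Finset.univ.filter (· ≠ i), w i j := by
    intro i
    rw [hν, hν]
    have h1 : ∑ k : N, (∑ j ∈ Finset.univ.filter (· ≠ k), w k j)
        = (∑ j ∈ Finset.univ.filter (· ≠ i), w i j)
          + ∑ k ∈ Finset.univ.erase i, ∑ j ∈ Finset.univ.filter (· ≠ k), w k j :=
      (Finset.add_sum_erase _ _ (Finset.mem_univ i)).symm
    have hset : ∀ k : N, k ≠ i →
        ((Finset.univ.erase i).filter (· ≠ k)) = (Finset.univ.filter (· ≠ k)).erase i := by
      intro k hk
      ext a
      simp [Finset.mem_erase, Finset.mem_filter, and_comm]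
    have h2 : ∀ k ∈ Finset.univ.erase i,
        ∑ j ∈ Finset.univ.filter (· ≠ k), w k j
          = w k i + ∑ j ∈ (Finset.univ.erase i).filter (· ≠ k), w k j := by
      intro k hk
      have hk' : k ≠ i := Finset.ne_of_mem_erase hk
      rw [hset k hk']
      exact (Finset.add_sum_erase _ _ (by simp [hk'.symm])).symm
    have h3 : ∑ k ∈ Finset.univ.erase i, ∑ j ∈ Finset.univ.filter (· ≠ k), w k j
        = (∑ k ∈ Finset.univ.erase i, w k i)
          + ∑ k ∈ Finset.univ.erase i, ∑ j ∈ (Finset.univ.erase i).filter (· ≠ k), w k j := by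
      rw [← Finset.sum_add_distrib]
      exact Finset.sum_congr rfl h2
    have h4 : (∑ k ∈ Finset.univ.erase i, w k i)
        = ∑ j ∈ Finset.univ.filter (· ≠ i), w i j := by
      rw [show (Finset.univ.filter (· ≠ i)) = Finset.univ.erase i by
        ext a; simp [Finset.mem_erase]]
      exact Finset.sum_congr rfl (fun k _ => hsym k i)
    rw [h1, h3, h4]
    ring
  have hνN : ν Finset.univ
      = (1/2) * ∑ i : N, (ν Finset.univ - ν (Finset.univ.erase i)) := by
    conv_lhs => rw [hν Finset.univ]
    congr 1
    exact Finset.sum_congr rfl (fun i _ => (hM i).symm)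
  have hlam' : lam * (2 * ν Finset.univ) = ν Finset.univ := by
    have : ∑ i : N, (lam * (ν Finset.univ - ν (Finset.univ.erase i))
        + (1 - lam) * ν {i})
        = lam * ∑ i : N, (ν Finset.univ - ν (Finset.univ.erase i)) := by
      rw [Finset.mul_sum]
      exact Finset.sum_congr rfl (fun i _ => by rw [hsingle i]; ring)
    rw [this] at hlam
    have hsum : ∑ i : N, (ν Finset.univ - ν (Finset.univ.erase i))
        = 2 * ν Finset.univ := by
      have := hνN; linarith
    rw [hsum] at hlam
    exact hlam
  have hlam12 : lam = 1/2 := by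
    have h2ν : (2 : ℝ) * ν Finset.univ ≠ 0 := by
      intro h; exact hgrand (by linarith)
    field_simp at hlam' ⊢
    exact mul_right_cancel₀ hgrand (by rw [hlam'])
  refine ⟨hlam12, fun i => ?_⟩
  rw [hlam12, hsingle i, hM i, hφ i]
  ring
end
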